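/- For c > 0 and integers 1 ≤ r ≤ l define I_{l,r}(c) := (c^{r-1}/(2l-r-1)!) ∫_0^∞ (σ + c) σ^{2l-r-1} exp(−σ²/2 − cσ) dσ. Then for every integer l ≥ 2 and every 1 ≤ r ≤ l - 1, (2l - r - 2)·I_{l,r}(c) + I_{l,r+1}(c) = I_{l-1,r}(c). -/

import Mathlib

open MeasureTheory

/-- `I l r c` : the limiting probability of a fixed bouquet configuration with
`r` binary trees spanning `l` marked vertices, in the critical regime `κ = c√N`. -/
noncomputable def I (l r : ℕ) (c : ℝ) : ℝ :=
  (c ^ (r - 1) / (Nat.factorial (2 * l - r - 1) : ℝ)) *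
    ∫ σ in Set.Ioi (0 : ℝ),
      (σ + c) * σ ^ (2 * l - r - 1) * Real.exp (-σ ^ 2 / 2 - c * σ)

lemma Jint (c : ℝ) (hc : 0 ≤ c) (m : ℕ) :
    IntegrableOn (fun σ : ℝ => σ ^ m * Real.exp (-σ ^ 2 / 2 - c * σ)) (Set.Ioi 0) := by
  have hm : (-1 : ℝ) < (m : ℝ) := lt_of_lt_of_le (by norm_num) (Nat.cast_nonneg m)
  apply Integrable.mono' (integrableOn_rpow_mul_exp_neg_mul_sq (b := 1/2) (by norm_num) hm)
  · apply Continuous.aestronglyMeasurable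
    exact (continuous_pow m).mul
      (Real.continuous_exp.comp (((continuous_pow 2).neg.div_const 2).sub
        (continuous_const.mul continuous_id)))
  · filter_upwards [ae_restrict_mem measurableSet_Ioi] with x hx
    have hx0 : (0 : ℝ) < x := hx
    rw [Real.norm_eq_abs, abs_mul, abs_of_nonneg (by positivity),
      abs_of_nonneg (Real.exp_pos _).le, Real.rpow_natCast]
    exact mul_le_mul_of_nonneg_left (Real.exp_le_exp.2 (by nlinarith [hx0.le]))
      (pow_nonneg hx0.le m)

lemma JintC (c : ℝ) (hc : 0 ≤ c) (m : ℕ) :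
    IntegrableOn (fun σ : ℝ => (σ + c) * σ ^ m * Real.exp (-σ ^ 2 / 2 - c * σ))
      (Set.Ioi 0) := by
  have h := (Jint c hc (m + 1)).add ((Jint c hc m).const_mul c)
  exact IntegrableOn.congr_fun h (fun x _ => by simp [Pi.add_apply]; ring) measurableSet_Ioi

lemma Jtend (c : ℝ) (hc : 0 < c) (k : ℕ) :
    Filter.Tendsto (fun σ : ℝ => σ ^ k * Real.exp (-σ ^ 2 / 2 - c * σ))
      Filter.atTop (nhds 0) := by
  have h1 : Filter.Tendsto (fun σ : ℝ => σ ^ k * Real.exp (-(c * σ)))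
      Filter.atTop (nhds 0) := by
    have h0 := (Real.tendsto_pow_mul_exp_neg_atTop_nhds_zero k).comp
      (Filter.tendsto_id.const_mul_atTop hc)
    have h2 := h0.const_mul (1 / c ^ k)
    rw [mul_zero] at h2
    refine h2.congr fun x => ?_
    have hck : (c : ℝ) ^ k ≠ 0 := by positivity
    simp only [Function.comp, id_eq, mul_pow]
    field_simp
  apply squeeze_zero' ?_ ?_ h1
  · filter_upwards [Filter.eventually_ge_atTop (0 : ℝ)] with x hx
    positivity
  · filter_upwards [Filter.eventually_ge_atTop (0 : ℝ)] with x hx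
    have : -x ^ 2 / 2 - c * x ≤ -(c * x) := by nlinarith
    exact mul_le_mul_of_nonneg_left (Real.exp_le_exp.2 this) (by positivity)

lemma keylem (c : ℝ) (hc : 0 < c) (k : ℕ) :
    ∫ σ in Set.Ioi (0 : ℝ), (σ + c) * σ ^ (k + 1) * Real.exp (-σ ^ 2 / 2 - c * σ)
      = (k + 1 : ℝ) * ∫ σ in Set.Ioi (0 : ℝ), σ ^ k * Real.exp (-σ ^ 2 / 2 - c * σ) := by
  set f : ℝ → ℝ := fun σ => σ ^ (k + 1) * Real.exp (-σ ^ 2 / 2 - c * σ) with hf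
  set f' : ℝ → ℝ := fun σ =>
    (k + 1 : ℝ) * (σ ^ k * Real.exp (-σ ^ 2 / 2 - c * σ))
      - (σ + c) * σ ^ (k + 1) * Real.exp (-σ ^ 2 / 2 - c * σ) with hf'
  have hderiv : ∀ x ∈ Set.Ici (0 : ℝ), HasDerivAt f (f' x) x := by
    intro x _
    have h1 : HasDerivAt (fun σ : ℝ => σ ^ (k + 1)) ((k + 1 : ℝ) * x ^ k) x := by
      simpa using hasDerivAt_pow (k + 1) x
    have h3 : HasDerivAt (fun σ : ℝ => -σ ^ 2 / 2 - c * σ) (-x - c) x := by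
      have := ((hasDerivAt_pow 2 x).neg.div_const 2).sub ((hasDerivAt_id x).const_mul c)
      refine this.congr_deriv ?_
      simp
      ring
    have h2 := h3.exp
    have := h1.mul h2
    refine this.congr_deriv ?_
    simp only [hf']
    ring
  have hint : IntegrableOn f' (Set.Ioi 0) := by
    exact ((Jint c hc.le k).const_mul _).sub (JintC c hc.le (k + 1))
  have htend : Filter.Tendsto f Filter.atTop (nhds 0) := Jtend c hc (k + 1)
  have h0 := integral_Ioi_of_hasDerivAt_of_tendsto' hderiv hint htend
  have hf0 : f 0 = 0 := by simp [hf]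
  rw [hf0, sub_zero] at h0
  have hsub : ∫ σ in Set.Ioi (0 : ℝ), f' σ
      = ((k + 1 : ℝ) * ∫ σ in Set.Ioi (0 : ℝ), σ ^ k * Real.exp (-σ ^ 2 / 2 - c * σ))
        - ∫ σ in Set.Ioi (0 : ℝ), (σ + c) * σ ^ (k + 1) * Real.exp (-σ ^ 2 / 2 - c * σ) := by
    rw [← integral_const_mul, ← integral_sub ((Jint c hc.le k).const_mul _)
      (JintC c hc.le (k + 1))]
  rw [hsub] at h0
  linarith

lemma expandlem (c : ℝ) (hc : 0 < c) (m : ℕ) :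
    ∫ σ in Set.Ioi (0 : ℝ), (σ + c) * σ ^ m * Real.exp (-σ ^ 2 / 2 - c * σ)
      = (∫ σ in Set.Ioi (0 : ℝ), σ ^ (m + 1) * Real.exp (-σ ^ 2 / 2 - c * σ))
        + c * ∫ σ in Set.Ioi (0 : ℝ), σ ^ m * Real.exp (-σ ^ 2 / 2 - c * σ) := by
  rw [← integral_const_mul, ← integral_add (Jint c hc.le (m + 1))
    ((Jint c hc.le m).const_mul c)]
  apply setIntegral_congr_fun measurableSet_Ioi
  intro x _
  ring

theorem stmt14 (c : ℝ) (hc : 0 < c) (l r : ℕ) (hl : 2 ≤ l)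
    (hr1 : 1 ≤ r) (hrl : r ≤ l - 1) :
    (2 * l - r - 2 : ℕ) * I l r c + I l (r + 1) c = I (l - 1) r c := by
  obtain ⟨m, hm⟩ : ∃ m, 2 * l - r - 1 = m + 2 := ⟨2 * l - r - 3, by omega⟩
  have e1 : 2 * l - (r + 1) - 1 = m + 1 := by omega
  have e2 : 2 * (l - 1) - r - 1 = m := by omega
  have e3 : 2 * l - r - 2 = m + 1 := by omega
  have e4 : r + 1 - 1 = r := by omega
  have e5 : r = (r - 1) + 1 := by omega
  unfold I
  rw [hm, e1, e2, e3, e4]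
  rw [keylem c hc (m + 1), keylem c hc m, expandlem c hc m]
  set J1 : ℝ := ∫ σ in Set.Ioi (0 : ℝ), σ ^ (m + 1) * Real.exp (-σ ^ 2 / 2 - c * σ)
  set J0 : ℝ := ∫ σ in Set.Ioi (0 : ℝ), σ ^ m * Real.exp (-σ ^ 2 / 2 - c * σ)
  have hF2 : (Nat.factorial (m + 2) : ℝ)
      = ((m : ℝ) + 2) * ((m : ℝ) + 1) * (Nat.factorial m : ℝ) := by
    rw [Nat.factorial_succ, Nat.factorial_succ]
    push_cast
    ring
  have hF1 : (Nat.factorial (m + 1) : ℝ) = ((m : ℝ) + 1) * (Nat.factorial m : ℝ) := by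
    rw [Nat.factorial_succ]; push_cast; ring
  have hcr : c ^ r = c ^ (r - 1) * c := by
    conv_lhs => rw [e5]
    rw [pow_succ]
  have hFne : (Nat.factorial m : ℝ) ≠ 0 := by
    exact_mod_cast Nat.factorial_ne_zero m
  rw [hF2, hF1, hcr]
  push_cast
  field_simp
  ring
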